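/- Let $Z$ be an ordered $z$-tree with $k$ edges. Then for all $n\ge k+1$, ${\rm ex}_\rightarrow(n,Z) = (k-1)n - \binom{k}{2}$. -/

import Mathlib

/-- Vertex set of an ordered-graph pattern given by its edge set. -/
def verts (E : Finset (ℕ × ℕ)) : Finset ℕ := E.image Prod.fst ∪ E.image Prod.snd

/-- An increasing (ordered) tree with its current longest edge (i,j). -/
inductive IncTree : Finset (ℕ × ℕ) → ℕ → ℕ → Prop
  | single (i j : ℕ) : i < j → IncTree {(i, j)} i j
  | right (E : Finset (ℕ × ℕ)) (i j j' : ℕ) :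
      IncTree E i j → j < j' → IncTree (insert (i, j') E) i j'
  | left (E : Finset (ℕ × ℕ)) (i j i' : ℕ) :
      IncTree E i j → i' < i → IncTree (insert (i', j) E) i' j

/-- A z-tree: union of an increasing tree T with longest edge (i,j), a set S_j of edges
(h,j) with h < i, and a set S_i of edges (i,k) with k > j. -/
def ZTree (E : Finset (ℕ × ℕ)) : Prop :=
  ∃ (T Sj Si : Finset (ℕ × ℕ)) (i j : ℕ), IncTree T i j ∧
    (∀ p ∈ Sj, p.2 = j ∧ p.1 < i) ∧ (∀ p ∈ Si, p.1 = i ∧ j < p.2) ∧ E = T ∪ Sj ∪ Si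

/-- Ordered containment of a pattern in an n-vertex ordered graph. -/
def OContains {n : ℕ} (G : SimpleGraph (Fin n)) (E : Finset (ℕ × ℕ)) : Prop :=
  ∃ f : ℕ → Fin n, (∀ a ∈ verts E, ∀ b ∈ verts E, a < b → f a < f b) ∧
    ∀ p ∈ E, G.Adj (f p.1) (f p.2)

open Finset

lemma mem_verts {a : ℕ} {E : Finset (ℕ × ℕ)} :
    a ∈ verts E ↔ ∃ p ∈ E, a = p.1 ∨ a = p.2 := by
  simp only [verts, mem_union, mem_image]
  constructor
  · rintro (⟨p, hp, rfl⟩ | ⟨p, hp, rfl⟩) <;> exact ⟨p, hp, by simp⟩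
  · rintro ⟨p, hp, rfl | rfl⟩
    · exact Or.inl ⟨p, hp, rfl⟩
    · exact Or.inr ⟨p, hp, rfl⟩

lemma fst_mem_verts {p : ℕ × ℕ} {E : Finset (ℕ × ℕ)} (hp : p ∈ E) : p.1 ∈ verts E :=
  mem_verts.2 ⟨p, hp, Or.inl rfl⟩

lemma snd_mem_verts {p : ℕ × ℕ} {E : Finset (ℕ × ℕ)} (hp : p ∈ E) : p.2 ∈ verts E :=
  mem_verts.2 ⟨p, hp, Or.inr rfl⟩

lemma verts_mono {E F : Finset (ℕ × ℕ)} (h : E ⊆ F) : verts E ⊆ verts F := by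
  intro a ha
  rcases mem_verts.1 ha with ⟨p, hp, hc⟩
  exact mem_verts.2 ⟨p, h hp, hc⟩

lemma verts_insert (p : ℕ × ℕ) (E : Finset (ℕ × ℕ)) :
    verts (insert p E) = insert p.1 (insert p.2 (verts E)) := by
  unfold verts
  rw [image_insert, image_insert]
  ext a
  simp only [mem_union, mem_insert]
  tauto

lemma verts_union (A B : Finset (ℕ × ℕ)) : verts (A ∪ B) = verts A ∪ verts B := by
  ext a
  simp only [mem_verts, mem_union]
  constructor
  · rintro ⟨p, hp | hp, hc⟩
    · exact Or.inl ⟨p, hp, hc⟩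
    · exact Or.inr ⟨p, hp, hc⟩
  · rintro (⟨p, hp, hc⟩ | ⟨p, hp, hc⟩) <;> exact ⟨p, by tauto, hc⟩

lemma IncTree.lt {E i j} (h : IncTree E i j) : i < j := by
  induction h with
  | single i j h => exact h
  | right E i j j' h hj ih => omega
  | left E i j i' h hi ih => omega

lemma IncTree.mem_edge {E i j} (h : IncTree E i j) : (i, j) ∈ E := by
  induction h with
  | single i j h => simp
  | right E i j j' h hj ih => simp
  | left E i j i' h hi ih => simp

lemma IncTree.verts_between {E i j} (h : IncTree E i j) :
    ∀ v ∈ verts E, i ≤ v ∧ v ≤ j := by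
  induction h with
  | single i j h =>
      intro v hv
      rcases mem_verts.1 hv with ⟨p, hp, hc⟩
      simp only [mem_singleton] at hp
      subst hp; rcases hc with rfl | rfl <;> simp <;> omega
  | right E i j j' h hj ih =>
      intro v hv
      rw [verts_insert] at hv
      simp only [mem_insert] at hv
      have hij := h.lt
      rcases hv with rfl | rfl | hv
      · omega
      · omega
      · have := ih v hv; omega
  | left E i j i' h hi ih =>
      intro v hv
      rw [verts_insert] at hv
      simp only [mem_insert] at hv
      have hij := h.lt
      rcases hv with rfl | rfl | hv
      · omega
      · omega
      · have := ih v hv; omega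

lemma IncTree.edge_lt {E i j} (h : IncTree E i j) : ∀ p ∈ E, p.1 < p.2 := by
  induction h with
  | single i j h => intro p hp; simp only [mem_singleton] at hp; subst hp; exact h
  | right E i j j' h hj ih =>
      intro p hp
      rcases mem_insert.1 hp with rfl | hp
      · have := h.lt; simpa using by omega
      · exact ih p hp
  | left E i j i' h hi ih =>
      intro p hp
      rcases mem_insert.1 hp with rfl | hp
      · have := h.lt; simpa using by omega
      · exact ih p hp

lemma IncTree.card_verts {E i j} (h : IncTree E i j) :
    (verts E).card = E.card + 1 := by
  induction h with
  | single i j h =>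
      have : verts {(i, j)} = {i, j} := by
        rw [show ({(i,j)} : Finset (ℕ×ℕ)) = insert (i,j) ∅ by simp, verts_insert]
        simp [verts]
      rw [this]
      rw [card_insert_of_notMem (by simp; omega)]
      simp
  | right E i j j' h hj ih =>
      have hfresh : (i, j') ∉ E := by
        intro hmem
        have := (h.verts_between j' (snd_mem_verts hmem)).2
        omega
      have hvfresh : j' ∉ verts E := by
        intro hmem
        have := (h.verts_between j' hmem).2
        omega
      rw [verts_insert, card_insert_of_notMem hfresh]
      have hi : i ∈ verts E := fst_mem_verts h.mem_edge
      simp only []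
      rw [insert_eq_self.2 (mem_insert_of_mem hi)]
      rw [card_insert_of_notMem hvfresh, ih]
  | left E i j i' h hi ih =>
      have hfresh : (i', j) ∉ E := by
        intro hmem
        have := (h.verts_between i' (fst_mem_verts hmem)).1
        omega
      have hvfresh : i' ∉ verts E := by
        intro hmem
        have := (h.verts_between i' hmem).1
        omega
      rw [verts_insert, card_insert_of_notMem hfresh]
      have hj : j ∈ verts E := snd_mem_verts h.mem_edge
      simp only []
      rw [show insert j (verts E) = verts E from insert_eq_self.2 hj]
      rw [card_insert_of_notMem hvfresh, ih]

section Anatomy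
open Finset
variable {T Sj Si E : Finset (ℕ × ℕ)} {i j : ℕ}

structure ZDecomp (E T Sj Si : Finset (ℕ × ℕ)) (i j : ℕ) : Prop where
  hT : IncTree T i j
  hSj : ∀ p ∈ Sj, p.2 = j ∧ p.1 < i
  hSi : ∀ p ∈ Si, p.1 = i ∧ j < p.2
  hE : E = T ∪ Sj ∪ Si

lemma ztree_iff : ZTree E ↔ ∃ T Sj Si i j, ZDecomp E T Sj Si i j := by
  constructor
  · rintro ⟨T, Sj, Si, i, j, h1, h2, h3, h4⟩
    exact ⟨T, Sj, Si, i, j, ⟨h1, h2, h3, h4⟩⟩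
  · rintro ⟨T, Sj, Si, i, j, ⟨h1, h2, h3, h4⟩⟩
    exact ⟨T, Sj, Si, i, j, h1, h2, h3, h4⟩

namespace ZDecomp

lemma subT (h : ZDecomp E T Sj Si i j) : T ⊆ E := by rw [h.hE]; intro p hp; simp [hp]
lemma subSj (h : ZDecomp E T Sj Si i j) : Sj ⊆ E := by rw [h.hE]; intro p hp; simp [hp]
lemma subSi (h : ZDecomp E T Sj Si i j) : Si ⊆ E := by rw [h.hE]; intro p hp; simp [hp]

lemma edge_lt (h : ZDecomp E T Sj Si i j) : ∀ p ∈ E, p.1 < p.2 := by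
  intro p hp
  rw [h.hE] at hp
  simp only [mem_union] at hp
  have hij := h.hT.lt
  rcases hp with (hp | hp) | hp
  · exact h.hT.edge_lt p hp
  · have := h.hSj p hp; omega
  · have := h.hSi p hp; omega

lemma mem_ij (h : ZDecomp E T Sj Si i j) : (i, j) ∈ E := h.subT h.hT.mem_edge

lemma disjTSj (h : ZDecomp E T Sj Si i j) : Disjoint T Sj := by
  rw [disjoint_left]
  intro p hpT hpSj
  have h1 := (h.hT.verts_between p.1 (fst_mem_verts hpT)).1
  have h2 := (h.hSj p hpSj).2
  omega

lemma disjTSi (h : ZDecomp E T Sj Si i j) : Disjoint T Si := by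
  rw [disjoint_left]
  intro p hpT hpSi
  have h1 := (h.hT.verts_between p.2 (snd_mem_verts hpT)).2
  have h2 := (h.hSi p hpSi).2
  omega

lemma disjSjSi (h : ZDecomp E T Sj Si i j) : Disjoint Sj Si := by
  rw [disjoint_left]
  intro p hp1 hp2
  have h1 := (h.hSj p hp1).1
  have h2 := (h.hSi p hp2).2
  omega

lemma card_split (h : ZDecomp E T Sj Si i j) : E.card = T.card + Sj.card + Si.card := by
  rw [h.hE, card_union_of_disjoint, card_union_of_disjoint h.disjTSj]
  rw [disjoint_union_left]
  exact ⟨h.disjTSi, h.disjSjSi⟩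

lemma filter_lt_eq (h : ZDecomp E T Sj Si i j) : (verts E).filter (fun v => v < i) = Sj.image Prod.fst := by
  ext a
  simp only [mem_filter, mem_image]
  constructor
  · rintro ⟨ha, hai⟩
    rcases mem_verts.1 ha with ⟨p, hp, hc⟩
    rw [h.hE] at hp
    simp only [mem_union] at hp
    rcases hp with (hp | hp) | hp
    · exfalso
      rcases hc with rfl | rfl
      · have := (h.hT.verts_between _ (fst_mem_verts hp)).1; omega
      · have := (h.hT.verts_between _ (snd_mem_verts hp)).1; omega
    · rcases hc with rfl | rfl
      · exact ⟨p, hp, rfl⟩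
      · exfalso; have := h.hSj p hp; have := h.hT.lt; omega
    · exfalso
      have hq := h.hSi p hp
      have := h.hT.lt
      rcases hc with rfl | rfl <;> omega
  · rintro ⟨p, hp, rfl⟩
    have hq := h.hSj p hp
    exact ⟨fst_mem_verts (h.subSj hp), hq.2⟩

lemma filter_gt_eq (h : ZDecomp E T Sj Si i j) : (verts E).filter (fun v => j < v) = Si.image Prod.snd := by
  ext a
  simp only [mem_filter, mem_image]
  constructor
  · rintro ⟨ha, haj⟩
    rcases mem_verts.1 ha with ⟨p, hp, hc⟩
    rw [h.hE] at hp
    simp only [mem_union] at hp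
    rcases hp with (hp | hp) | hp
    · exfalso
      rcases hc with rfl | rfl
      · have := (h.hT.verts_between _ (fst_mem_verts hp)).2; omega
      · have := (h.hT.verts_between _ (snd_mem_verts hp)).2; omega
    · exfalso
      have hq := h.hSj p hp
      have := h.hT.lt
      rcases hc with rfl | rfl <;> omega
    · rcases hc with rfl | rfl
      · exfalso; have := h.hSi p hp; have := h.hT.lt; omega
      · exact ⟨p, hp, rfl⟩
  · rintro ⟨p, hp, rfl⟩
    have hq := h.hSi p hp
    exact ⟨snd_mem_verts (h.subSi hp), hq.2⟩

lemma filter_mid_eq (h : ZDecomp E T Sj Si i j) : (verts E).filter (fun v => i ≤ v ∧ v ≤ j) = verts T := by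
  ext a
  simp only [mem_filter]
  constructor
  · rintro ⟨ha, hai, haj⟩
    rcases mem_verts.1 ha with ⟨p, hp, hc⟩
    rw [h.hE] at hp
    simp only [mem_union] at hp
    rcases hp with (hp | hp) | hp
    · rcases hc with rfl | rfl
      · exact fst_mem_verts hp
      · exact snd_mem_verts hp
    · have hq := h.hSj p hp
      rcases hc with rfl | rfl
      · omega
      · rw [hq.1]; exact snd_mem_verts h.hT.mem_edge
    · have hq := h.hSi p hp
      rcases hc with rfl | rfl
      · rw [hq.1]; exact fst_mem_verts h.hT.mem_edge
      · omega
  · intro ha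
    have hb := h.hT.verts_between a ha
    exact ⟨verts_mono h.subT ha, hb.1, hb.2⟩

lemma card_filter_lt (h : ZDecomp E T Sj Si i j) : ((verts E).filter (fun v => v < i)).card = Sj.card := by
  rw [h.filter_lt_eq]
  apply card_image_of_injOn
  intro p hp q hq hpq
  have h1 := (h.hSj p hp).1
  have h2 := (h.hSj q hq).1
  exact Prod.ext hpq (h1.trans h2.symm)

lemma card_filter_gt (h : ZDecomp E T Sj Si i j) : ((verts E).filter (fun v => j < v)).card = Si.card := by
  rw [h.filter_gt_eq]
  apply card_image_of_injOn
  intro p hp q hq hpq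
  have h1 := (h.hSi p hp).1
  have h2 := (h.hSi q hq).1
  exact Prod.ext (h1.trans h2.symm) hpq

lemma card_filter_mid (h : ZDecomp E T Sj Si i j) :
    ((verts E).filter (fun v => i ≤ v ∧ v ≤ j)).card = T.card + 1 := by
  rw [h.filter_mid_eq, h.hT.card_verts]

end ZDecomp

lemma tri_card (S : Finset ℕ) (i j : ℕ) (hij : i ≤ j) :
    (S.filter (fun v => v < i)).card + (S.filter (fun v => i ≤ v ∧ v ≤ j)).card
      + (S.filter (fun v => j < v)).card = S.card := by
  have h1 := card_filter_add_card_filter_not (s := S) (p := fun v => v < i)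
  have h2 := card_filter_add_card_filter_not
    (s := S.filter (fun v => ¬ v < i)) (p := fun v => v ≤ j)
  rw [filter_filter, filter_filter] at h2
  have e1 : S.filter (fun v => ¬ v < i ∧ v ≤ j) = S.filter (fun v => i ≤ v ∧ v ≤ j) := by
    apply filter_congr; intro x _; constructor <;> (rintro ⟨h1', h2'⟩; exact ⟨by omega, h2'⟩)
  have e2 : S.filter (fun v => ¬ v < i ∧ ¬ v ≤ j) = S.filter (fun v => j < v) := by
    apply filter_congr; intro x _; constructor
    · rintro ⟨h1', h2'⟩; omega
    · intro h'; omega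
  rw [e1, e2] at h2
  omega

lemma ZDecomp.card_verts (h : ZDecomp E T Sj Si i j) :
    (verts E).card = E.card + 1 := by
  have := tri_card (verts E) i j (le_of_lt h.hT.lt)
  rw [h.card_filter_lt, h.card_filter_mid, h.card_filter_gt] at this
  rw [h.card_split]
  omega

lemma ztree_card_verts {E : Finset (ℕ × ℕ)} (h : ZTree E) :
    (verts E).card = E.card + 1 := by
  rcases ztree_iff.1 h with ⟨T, Sj, Si, i, j, hd⟩
  exact hd.card_verts

lemma ztree_edge_lt {E : Finset (ℕ × ℕ)} (h : ZTree E) : ∀ p ∈ E, p.1 < p.2 := by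
  rcases ztree_iff.1 h with ⟨T, Sj, Si, i, j, hd⟩
  exact hd.edge_lt

lemma ztree_nonempty {E : Finset (ℕ × ℕ)} (h : ZTree E) : 1 ≤ E.card := by
  rcases ztree_iff.1 h with ⟨T, Sj, Si, i, j, hd⟩
  exact card_pos.2 ⟨_, hd.mem_ij⟩

end Anatomy

section Peel
open Finset

structure PeelR (E E' : Finset (ℕ × ℕ)) (β m y : ℕ) : Prop where
  hmem : E = insert (β, m) E'
  hnot : (β, m) ∉ E'
  hmax : ∀ v ∈ verts E', v < m
  hy : (β, y) ∈ E'
  hytop : ∀ v ∈ verts E', v ≤ y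

structure PeelL (E E' : Finset (ℕ × ℕ)) (β m y : ℕ) : Prop where
  hmem : E = insert (m, β) E'
  hnot : (m, β) ∉ E'
  hmin : ∀ v ∈ verts E', m < v
  hy : (y, β) ∈ E'
  hybot : ∀ v ∈ verts E', y ≤ v


lemma inc_peel {T : Finset (ℕ × ℕ)} {i j : ℕ} (hT : IncTree T i j) (h2 : 2 ≤ T.card) :
    ∃ E', ZTree E' ∧ E'.card + 1 = T.card ∧
      ((∃ β m y, PeelR T E' β m y) ∨ (∃ β m y, PeelL T E' β m y)) := by
  cases hT with
  | single _i _j hij' =>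
      simp at h2
  | right E₀ _i j₀ _j h₀ hj =>
      have hnot : (i, j) ∉ E₀ := by
        intro hmem'
        have := (h₀.verts_between j (snd_mem_verts hmem')).2
        omega
      refine ⟨E₀, ⟨E₀, ∅, ∅, i, j₀, h₀, by simp, by simp, by simp⟩, ?_,
        Or.inl ⟨i, j, j₀, rfl, hnot, ?_, h₀.mem_edge, ?_⟩⟩
      · rw [card_insert_of_notMem hnot]
      · intro v hv
        have := h₀.verts_between v hv
        omega
      · intro v hv
        exact (h₀.verts_between v hv).2
  | left E₀ i₀ _j _i h₀ hi0 =>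
      have hnot : (i, j) ∉ E₀ := by
        intro hmem'
        have := (h₀.verts_between i (fst_mem_verts hmem')).1
        omega
      refine ⟨E₀, ⟨E₀, ∅, ∅, i₀, j, h₀, by simp, by simp, by simp⟩, ?_,
        Or.inr ⟨j, i, i₀, rfl, hnot, ?_, h₀.mem_edge, ?_⟩⟩
      · rw [card_insert_of_notMem hnot]
      · intro v hv
        have := h₀.verts_between v hv
        omega
      · intro v hv
        exact (h₀.verts_between v hv).1

lemma ztree_peel {E : Finset (ℕ × ℕ)} (h : ZTree E) (h2 : 2 ≤ E.card) :
    ∃ E', ZTree E' ∧ E'.card + 1 = E.card ∧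
      ((∃ β m y, PeelR E E' β m y) ∨ (∃ β m y, PeelL E E' β m y)) := by
  rcases ztree_iff.1 h with ⟨T, Sj, Si, i, j, hd⟩
  have hT := hd.hT
  have hij : i < j := hT.lt
  by_cases hSi : Si.Nonempty
  · -- peel the largest vertex of Si
    have hSiim : (Si.image Prod.snd).Nonempty := hSi.image _
    set M := (Si.image Prod.snd).max' hSiim with hMdef
    have hMmem : M ∈ Si.image Prod.snd := max'_mem _ _
    rcases mem_image.1 hMmem with ⟨p, hpSi, hpM⟩
    have hpfst : p.1 = i := (hd.hSi p hpSi).1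
    have hiM : (i, M) ∈ Si := by
      have : p = (i, M) := Prod.ext hpfst hpM
      rwa [this] at hpSi
    have hjM : j < M := (hd.hSi (i, M) hiM).2
    set Si' := Si.erase (i, M) with hSi'def
    set E' := T ∪ Sj ∪ Si' with hE'def
    have hZ' : ZTree E' := ⟨T, Sj, Si', i, j, hT, hd.hSj,
      fun p hp => hd.hSi p (erase_subset _ _ hp), rfl⟩
    have hmem : E = insert (i, M) E' := by
      rw [hd.hE, hE'def, hSi'def, ← union_insert, insert_erase hiM]
    have hnot : (i, M) ∉ E' := by
      rw [hE'def]
      simp only [mem_union, not_or]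
      refine ⟨⟨?_, ?_⟩, ?_⟩
      · intro hmem'
        have := (hT.verts_between M (snd_mem_verts hmem')).2
        omega
      · intro hmem'
        have := (hd.hSj (i, M) hmem').1
        omega
      · exact notMem_erase _ _
    have hmax : ∀ v ∈ verts E', v < M := by
      intro v hv
      rcases mem_verts.1 hv with ⟨q, hq, hc⟩
      rw [hE'def] at hq
      simp only [mem_union] at hq
      rcases hq with (hq | hq) | hq
      · rcases hc with rfl | rfl
        · have := (hT.verts_between _ (fst_mem_verts hq)).2; omega
        · have := (hT.verts_between _ (snd_mem_verts hq)).2; omega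
      · have h1 := hd.hSj q hq
        rcases hc with rfl | rfl <;> omega
      · have hqSi := erase_subset _ _ hq
        have h1 := hd.hSi q hqSi
        rcases hc with rfl | rfl
        · omega
        · have hle : q.2 ≤ M := le_max' _ _ (mem_image_of_mem _ hqSi)
          have hne : q.2 ≠ M := by
            intro hqeq
            have : q = (i, M) := Prod.ext h1.1 hqeq
            rw [this] at hq
            exact notMem_erase _ _ hq
          omega
    refine ⟨E', hZ', ?_, Or.inl ⟨i, M, ?_⟩⟩
    · rw [hmem, card_insert_of_notMem hnot]
    by_cases hSi' : Si'.Nonempty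
    · have him : (Si'.image Prod.snd).Nonempty := hSi'.image _
      set y := (Si'.image Prod.snd).max' him with hydef
      have hymem : y ∈ Si'.image Prod.snd := max'_mem _ _
      rcases mem_image.1 hymem with ⟨q, hqSi', hqy⟩
      have hq1 : q.1 = i := (hd.hSi q (erase_subset _ _ hqSi')).1
      have hiy : (i, y) ∈ Si' := by
        have : q = (i, y) := Prod.ext hq1 hqy
        rwa [this] at hqSi'
      have hjy : j < y := (hd.hSi (i, y) (erase_subset _ _ hiy)).2
      refine ⟨y, hmem, hnot, hmax, ?_, ?_⟩
      · rw [hE'def]; exact mem_union_right _ hiy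
      · intro v hv
        rcases mem_verts.1 hv with ⟨q', hq', hc⟩
        rw [hE'def] at hq'
        simp only [mem_union] at hq'
        rcases hq' with (hq' | hq') | hq'
        · rcases hc with rfl | rfl
          · have := (hT.verts_between _ (fst_mem_verts hq')).2; omega
          · have := (hT.verts_between _ (snd_mem_verts hq')).2; omega
        · have h1 := hd.hSj q' hq'
          rcases hc with rfl | rfl <;> omega
        · have h1 := hd.hSi q' (erase_subset _ _ hq')
          rcases hc with rfl | rfl
          · omega
          · exact le_max' _ _ (mem_image_of_mem _ hq')
    · -- Si' empty, use y = j
      refine ⟨j, hmem, hnot, hmax, ?_, ?_⟩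
      · rw [hE'def]; exact mem_union_left _ (mem_union_left _ hT.mem_edge)
      · intro v hv
        rcases mem_verts.1 hv with ⟨q', hq', hc⟩
        rw [hE'def] at hq'
        simp only [mem_union] at hq'
        rcases hq' with (hq' | hq') | hq'
        · rcases hc with rfl | rfl
          · have := (hT.verts_between _ (fst_mem_verts hq')).2; omega
          · have := (hT.verts_between _ (snd_mem_verts hq')).2; omega
        · have h1 := hd.hSj q' hq'
          rcases hc with rfl | rfl <;> omega
        · exact absurd ⟨q', hq'⟩ hSi'
  · by_cases hSj : Sj.Nonempty
    · -- peel the smallest vertex of Sj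
      have hSjim : (Sj.image Prod.fst).Nonempty := hSj.image _
      set M := (Sj.image Prod.fst).min' hSjim with hMdef
      have hMmem : M ∈ Sj.image Prod.fst := min'_mem _ _
      rcases mem_image.1 hMmem with ⟨p, hpSj, hpM⟩
      have hpsnd : p.2 = j := (hd.hSj p hpSj).1
      have hMj : (M, j) ∈ Sj := by
        have : p = (M, j) := Prod.ext hpM hpsnd
        rwa [this] at hpSj
      have hMi : M < i := (hd.hSj (M, j) hMj).2
      set Sj' := Sj.erase (M, j) with hSj'def
      set E' := T ∪ Sj' ∪ Si with hE'def
      have hZ' : ZTree E' := ⟨T, Sj', Si, i, j, hT,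
        fun p hp => hd.hSj p (erase_subset _ _ hp), hd.hSi, rfl⟩
      have hmem : E = insert (M, j) E' := by
        rw [hd.hE, hE'def, hSj'def]
        rw [show T ∪ Sj ∪ Si = T ∪ insert (M, j) (Sj.erase (M, j)) ∪ Si by
          rw [insert_erase hMj]]
        rw [union_insert, insert_union]
      have hnot : (M, j) ∉ E' := by
        rw [hE'def]
        simp only [mem_union, not_or]
        refine ⟨⟨?_, ?_⟩, ?_⟩
        · intro hmem'
          have := (hT.verts_between M (fst_mem_verts hmem')).1
          omega
        · exact notMem_erase _ _
        · intro hmem'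
          have := (hd.hSi (M, j) hmem').1
          omega
      have hmin : ∀ v ∈ verts E', M < v := by
        intro v hv
        rcases mem_verts.1 hv with ⟨q, hq, hc⟩
        rw [hE'def] at hq
        simp only [mem_union] at hq
        rcases hq with (hq | hq) | hq
        · rcases hc with rfl | rfl
          · have := (hT.verts_between _ (fst_mem_verts hq)).1; omega
          · have := (hT.verts_between _ (snd_mem_verts hq)).1; omega
        · have hqSj := erase_subset _ _ hq
          have h1 := hd.hSj q hqSj
          rcases hc with rfl | rfl
          · have hle : M ≤ q.1 := min'_le _ _ (mem_image_of_mem _ hqSj)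
            have hne : q.1 ≠ M := by
              intro hqeq
              have : q = (M, j) := Prod.ext hqeq h1.1
              rw [this] at hq
              exact notMem_erase _ _ hq
            omega
          · omega
        · have h1 := hd.hSi q hq
          rcases hc with rfl | rfl <;> omega
      refine ⟨E', hZ', ?_, Or.inr ⟨j, M, ?_⟩⟩
      · rw [hmem, card_insert_of_notMem hnot]
      by_cases hSj' : Sj'.Nonempty
      · have him : (Sj'.image Prod.fst).Nonempty := hSj'.image _
        set y := (Sj'.image Prod.fst).min' him with hydef
        have hymem : y ∈ Sj'.image Prod.fst := min'_mem _ _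
        rcases mem_image.1 hymem with ⟨q, hqSj', hqy⟩
        have hq2 : q.2 = j := (hd.hSj q (erase_subset _ _ hqSj')).1
        have hyj : (y, j) ∈ Sj' := by
          have : q = (y, j) := Prod.ext hqy hq2
          rwa [this] at hqSj'
        have hyi : y < i := (hd.hSj (y, j) (erase_subset _ _ hyj)).2
        refine ⟨y, hmem, hnot, hmin, ?_, ?_⟩
        · rw [hE'def]; exact mem_union_left _ (mem_union_right _ hyj)
        · intro v hv
          rcases mem_verts.1 hv with ⟨q', hq', hc⟩
          rw [hE'def] at hq'
          simp only [mem_union] at hq'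
          rcases hq' with (hq' | hq') | hq'
          · rcases hc with rfl | rfl
            · have := (hT.verts_between _ (fst_mem_verts hq')).1; omega
            · have := (hT.verts_between _ (snd_mem_verts hq')).1; omega
          · have h1 := hd.hSj q' (erase_subset _ _ hq')
            rcases hc with rfl | rfl
            · exact min'_le _ _ (mem_image_of_mem _ hq')
            · omega
          · have h1 := hd.hSi q' hq'
            rcases hc with rfl | rfl <;> omega
      · refine ⟨i, hmem, hnot, hmin, ?_, ?_⟩
        · rw [hE'def]; exact mem_union_left _ (mem_union_left _ hT.mem_edge)
        · intro v hv
          rcases mem_verts.1 hv with ⟨q', hq', hc⟩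
          rw [hE'def] at hq'
          simp only [mem_union] at hq'
          rcases hq' with (hq' | hq') | hq'
          · rcases hc with rfl | rfl
            · exact (hT.verts_between _ (fst_mem_verts hq')).1
            · exact (hT.verts_between _ (snd_mem_verts hq')).1
          · exact absurd ⟨q', hq'⟩ hSj'
          · have h1 := hd.hSi q' hq'
            rcases hc with rfl | rfl <;> omega
    · -- Sj and Si are both empty: E = T
      have hSje : Sj = ∅ := not_nonempty_iff_eq_empty.1 hSj
      have hSie : Si = ∅ := not_nonempty_iff_eq_empty.1 hSi
      have hET : E = T := by rw [hd.hE, hSje, hSie]; simp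
      rw [hET] at h2 ⊢
      exact inc_peel hT h2

end Peel

section Count
open Finset


lemma choose2_succ (m : ℕ) : (m + 1).choose 2 = m.choose 2 + m := by
  rw [Nat.choose_two_right, Nat.choose_two_right]
  cases m with
  | zero => simp
  | succ s =>
      have h1 : (s + 1 + 1) * (s + 1 + 1 - 1) = (s + 1) * (s + 1 - 1) + 2 * (s + 1) := by
        simp only [Nat.add_sub_cancel]
        ring
      rw [h1, Nat.add_mul_div_left _ _ (by norm_num : (0:ℕ) < 2)]

lemma sumtrunc (N R : ℕ) (h : N ≤ R) :
    ∑ y ∈ range R, (N - y) = (N + 1).choose 2 := by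
  induction N with
  | zero => simp
  | succ n ih =>
      have ih' := ih (by omega)
      have hstep : ∀ y ∈ range R, (n + 1 - y) = (n - y) + (if y ≤ n then 1 else 0) := by
        intro y hy; split <;> omega
      rw [Finset.sum_congr rfl hstep, Finset.sum_add_distrib, ih']
      have hcard : ∑ y ∈ range R, (if y ≤ n then 1 else 0)
          = ((range R).filter (fun y => y ≤ n)).card := by
        rw [Finset.card_filter]
      have hfe : (range R).filter (fun y => y ≤ n) = range (n + 1) := by
        ext y; simp only [mem_filter, mem_range]; omega
      rw [hcard, hfe, card_range, show n + 1 + 1 = (n + 1) + 1 from rfl, choose2_succ (n + 1)]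

lemma finfilter_card {n : ℕ} (P : ℕ → Prop) [DecidablePred P] :
    ((univ : Finset (Fin n)).filter (fun y => P y.val)).card = ((range n).filter P).card := by
  apply card_bij (fun y _ => y.val)
  · intro a ha
    simp only [mem_filter, mem_range]
    exact ⟨a.isLt, (mem_filter.1 ha).2⟩
  · intro a _ b _ hab
    exact Fin.val_injective hab
  · intro b hb
    simp only [mem_filter, mem_range] at hb
    exact ⟨⟨b, hb.1⟩, mem_filter.2 ⟨mem_univ _, hb.2⟩, rfl⟩

lemma paircount {n : ℕ} (R : Fin n → Fin n → Prop) [DecidableRel R] :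
    ((univ : Finset (Fin n × Fin n)).filter (fun p => p.1 < p.2 ∧ R p.1 p.2)).card
      = ∑ x : Fin n, ((univ : Finset (Fin n)).filter (fun y => x < y ∧ R x y)).card := by
  rw [Finset.card_eq_sum_card_fiberwise (f := Prod.fst) (t := univ) (fun x _ => mem_univ _)]
  apply Finset.sum_congr rfl
  intro x _
  have himg : ((univ : Finset (Fin n × Fin n)).filter
        (fun p => p.1 < p.2 ∧ R p.1 p.2)).filter (fun p => p.1 = x)
      = ((univ : Finset (Fin n)).filter (fun y => x < y ∧ R x y)).image (fun y => (x, y)) := by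
    ext p
    simp only [mem_filter, mem_image, filter_filter, mem_univ, true_and]
    constructor
    · rintro ⟨⟨h1, h2⟩, h3⟩
      exact ⟨p.2, ⟨by rw [← h3]; exact h1, by rw [← h3]; exact h2⟩, by rw [← h3]⟩
    · rintro ⟨y, ⟨h1, h2⟩, rfl⟩
      exact ⟨⟨h1, h2⟩, rfl⟩
  rw [himg, card_image_of_injective]
  intro a b hab
  simpa using congrArg Prod.snd hab

lemma edgecount {n : ℕ} (G : SimpleGraph (Fin n)) [DecidableRel G.Adj] :
    G.edgeSet.ncard
      = ((univ : Finset (Fin n × Fin n)).filter (fun p => p.1 < p.2 ∧ G.Adj p.1 p.2)).card := by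
  classical
  rw [← SimpleGraph.coe_edgeFinset, Set.ncard_coe_finset]
  symm
  apply card_bij (fun p _ => s(p.1, p.2))
  · intro p hp
    simp only [mem_filter] at hp
    rw [SimpleGraph.mem_edgeFinset]
    exact hp.2.2
  · intro p hp q hq hpq
    simp only [mem_filter] at hp hq
    rcases Sym2.mk_eq_mk_iff.1 hpq with h | h
    · exact h
    · exfalso
      rw [h] at hp
      have hlt : q.2 < q.1 := by simpa using hp.2.1
      exact absurd (lt_trans hq.2.1 hlt) (lt_irrefl _)
  · intro e he
    induction e with
    | _ u v =>
      rw [SimpleGraph.mem_edgeFinset, SimpleGraph.mem_edgeSet] at he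
      rcases lt_trichotomy u v with h | h | h
      · exact ⟨(u, v), mem_filter.2 ⟨mem_univ _, h, he⟩, rfl⟩
      · exact absurd h (G.ne_of_adj he)
      · exact ⟨(v, u), mem_filter.2 ⟨mem_univ _, h, he.symm⟩, Sym2.eq_swap⟩

lemma arith0 (k n : ℕ) (h : k ≤ n) : k.choose 2 ≤ (k - 1) * n := by
  rw [Nat.choose_two_right]
  calc k * (k - 1) / 2 ≤ k * (k - 1) := Nat.div_le_self _ _
    _ = (k - 1) * k := Nat.mul_comm _ _
    _ ≤ (k - 1) * n := Nat.mul_le_mul_left _ h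

lemma arith1 (k n : ℕ) (hk : 1 ≤ k) (hn : k + 1 ≤ n) :
    n.choose 2 - (n - k + 1).choose 2 = (k - 1) * n - k.choose 2 := by
  induction k with
  | zero => omega
  | succ k ih =>
      rcases Nat.eq_zero_or_pos k with rfl | hkpos
      · have : n - 1 + 1 = n := by omega
        rw [this]
        simp
      · have ih' := ih hkpos (by omega)
        have e1 : n - k + 1 = (n - (k + 1) + 1) + 1 := by omega
        have e2 : (n - (k + 1) + 1 + 1).choose 2
            = (n - (k + 1) + 1).choose 2 + (n - (k + 1) + 1) := choose2_succ _
        have bq : (n - k + 1).choose 2 ≤ n.choose 2 :=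
          Nat.choose_le_choose 2 (by omega)
        have bp : (n - (k + 1) + 1).choose 2 ≤ n.choose 2 :=
          Nat.choose_le_choose 2 (by omega)
        have rk : (k + 1).choose 2 = k.choose 2 + k := choose2_succ _
        have b0 : k.choose 2 ≤ (k - 1) * n := arith0 k n (by omega)
        have me : k * n = (k - 1) * n + n := by
          conv_lhs => rw [show k = (k - 1) + 1 by omega]
          rw [add_mul, one_mul]
        have goal_eq : (k + 1 - 1) * n = k * n := by simp
        rw [goal_eq, rk]
        rw [e1, e2] at ih' bq
        omega
  
lemma arith2 (k n : ℕ) (hk : 2 ≤ k) (hn : k + 1 ≤ n) :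
    (n.choose 2 - (n - (k - 1) + 1).choose 2) + (n - k + 1)
      = n.choose 2 - (n - k + 1).choose 2 := by
  have keq : n - (k - 1) + 1 = (n - k + 1) + 1 := by omega
  have e2 : ((n - k + 1) + 1).choose 2 = (n - k + 1).choose 2 + (n - k + 1) := choose2_succ _
  have bq : ((n - k + 1) + 1).choose 2 ≤ n.choose 2 :=
    Nat.choose_le_choose 2 (by omega)
  rw [keq, e2] at *
  omega

end Count

section Lower
open Finset

lemma card_filter_le_of_maps {n : ℕ} (S : Finset ℕ) (f : ℕ → Fin n)
    (hmono : ∀ a ∈ S, ∀ b ∈ S, a < b → f a < f b)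
    (P : ℕ → Prop) [DecidablePred P] (B : Finset ℕ)
    (hmaps : ∀ v ∈ S, P v → (f v : ℕ) ∈ B) :
    (S.filter P).card ≤ B.card := by
  apply Finset.card_le_card_of_injOn (fun v => (f v : ℕ))
  · intro v hv
    rcases mem_filter.1 hv with ⟨h1, h2⟩
    exact hmaps v h1 h2
  · intro u hu v hv huv
    simp only [coe_filter, Set.mem_setOf_eq] at hu hv
    by_contra hne
    rcases Nat.lt_or_ge u v with h | h
    · have := hmono u hu.1 v hv.1 h
      rw [Fin.lt_def] at this
      simp only at huv
      omega
    · have hlt : v < u := by omega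
      have := hmono v hv.1 u hu.1 hlt
      rw [Fin.lt_def] at this
      simp only at huv
      omega

lemma ztree_anatomy {E : Finset (ℕ × ℕ)} (h : ZTree E) :
    ∃ i j a b t, (i, j) ∈ E ∧ i < j ∧ 1 ≤ t ∧ a + t + b = E.card ∧
      ((verts E).filter (fun v => v < i)).card = a ∧
      ((verts E).filter (fun v => j < v)).card = b ∧
      ((verts E).filter (fun v => i ≤ v ∧ v ≤ j)).card = t + 1 := by
  rcases ztree_iff.1 h with ⟨T, Sj, Si, i, j, hd⟩
  refine ⟨i, j, Sj.card, Si.card, T.card, hd.mem_ij, hd.hT.lt, ?_, ?_,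
    hd.card_filter_lt, hd.card_filter_gt, hd.card_filter_mid⟩
  · exact card_pos.2 ⟨_, hd.hT.mem_edge⟩
  · rw [hd.card_split]; ring

lemma lower_bound {n : ℕ} {E : Finset (ℕ × ℕ)} (hZ : ZTree E) (hn : E.card + 1 ≤ n) :
    ∃ G : SimpleGraph (Fin n), ¬ OContains G E ∧
      G.edgeSet.ncard = n.choose 2 - (n - E.card + 1).choose 2 := by
  classical
  obtain ⟨i, j, a, b, t, hijE, hij, ht, habt, hca, hcb, hct⟩ := ztree_anatomy hZ
  set k := E.card with hkdef
  -- the construction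
  set cond : ℕ → ℕ → Prop := fun x y => x < a ∨ n - b ≤ y ∨ y - x ≤ t - 1 with hconddef
  set G : SimpleGraph (Fin n) :=
    SimpleGraph.fromRel (fun x y => x < y ∧ cond x.val y.val) with hGdef
  haveI : DecidableRel G.Adj := Classical.decRel _
  have hadj_iff : ∀ x y : Fin n, x < y → (G.Adj x y ↔ cond x.val y.val) := by
    intro x y hxy
    rw [hGdef, SimpleGraph.fromRel_adj]
    constructor
    · rintro ⟨hne, ⟨_, hc⟩ | ⟨hyx, _⟩⟩
      · exact hc
      · exact absurd hyx (asymm hxy)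
    · intro hc
      exact ⟨ne_of_lt hxy, Or.inl ⟨hxy, hc⟩⟩
  refine ⟨G, ?_, ?_⟩
  · -- avoidance
    rintro ⟨f, hmono, hadj⟩
    have hiv : i ∈ verts E := fst_mem_verts hijE
    have hjv : j ∈ verts E := snd_mem_verts hijE
    have hfij : f i < f j := hmono i hiv j hjv hij
    have hAdj := hadj (i, j) hijE
    rw [hadj_iff _ _ hfij] at hAdj
    -- bounds
    have hA : a ≤ (f i : ℕ) := by
      rw [← hca]
      calc ((verts E).filter (fun v => v < i)).card ≤ (range (f i : ℕ)).card := by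
            apply card_filter_le_of_maps _ f hmono
            intro v hv hvP
            rw [mem_range]
            have := hmono v hv i hiv hvP
            rwa [Fin.lt_def] at this
        _ = (f i : ℕ) := card_range _
    have hB : b ≤ n - 1 - (f j : ℕ) := by
      rw [← hcb]
      calc ((verts E).filter (fun v => j < v)).card
          ≤ (Finset.Ico ((f j : ℕ) + 1) n).card := by
            apply card_filter_le_of_maps _ f hmono
            intro v hv hvP
            rw [mem_Ico]
            have := hmono j hjv v hv hvP
            rw [Fin.lt_def] at this
            exact ⟨by omega, (f v).isLt⟩
        _ = n - ((f j : ℕ) + 1) := Nat.card_Ico _ _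
        _ ≤ n - 1 - (f j : ℕ) := by omega
    have hmid : t + (f i : ℕ) ≤ (f j : ℕ) := by
      have hle : t + 1 ≤ (Finset.Icc (f i : ℕ) (f j : ℕ)).card := by
        rw [← hct]
        apply card_filter_le_of_maps _ f hmono
        intro v hv hvP
        rw [mem_Icc]
        constructor
        · rcases Nat.eq_or_lt_of_le hvP.1 with h | h
          · rw [← h]
          · have := hmono i hiv v hv h
            rw [Fin.lt_def] at this; omega
        · rcases Nat.eq_or_lt_of_le hvP.2 with h | h
          · rw [h]
          · have := hmono v hv j hjv h
            rw [Fin.lt_def] at this; omega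
      rw [Nat.card_Icc] at hle
      have : (f i : ℕ) < (f j : ℕ) := by rwa [Fin.lt_def] at hfij
      omega
    have hjlt : (f j : ℕ) < n := (f j).isLt
    rw [hconddef] at hAdj
    rcases hAdj with hc | hc | hc
    · omega
    · omega
    · omega
  · -- edge count
    rw [edgecount G, paircount]
    have hsplit : ∀ x : Fin n,
        ((univ : Finset (Fin n)).filter (fun y => x < y ∧ G.Adj x y)).card
          + ((univ : Finset (Fin n)).filter (fun y => x < y ∧ ¬ cond x.val y.val)).card
        = ((univ : Finset (Fin n)).filter (fun y => x < y)).card := by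
      intro x
      have h1 := card_filter_add_card_filter_not
        (s := (univ : Finset (Fin n)).filter (fun y => x < y))
        (p := fun y => cond x.val y.val)
      rw [filter_filter, filter_filter] at h1
      have h2 : (univ : Finset (Fin n)).filter (fun y => x < y ∧ G.Adj x y)
          = (univ : Finset (Fin n)).filter (fun y => x < y ∧ cond x.val y.val) := by
        apply filter_congr
        intro y _
        constructor
        · rintro ⟨h3, h4⟩; exact ⟨h3, (hadj_iff x y h3).1 h4⟩
        · rintro ⟨h3, h4⟩; exact ⟨h3, (hadj_iff x y h3).2 h4⟩
      rw [h2]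
      convert h1 using 3
    have hsum : (∑ x : Fin n, ((univ : Finset (Fin n)).filter (fun y => x < y ∧ G.Adj x y)).card)
        + (∑ x : Fin n, ((univ : Finset (Fin n)).filter (fun y => x < y ∧ ¬ cond x.val y.val)).card)
        = ∑ x : Fin n, ((univ : Finset (Fin n)).filter (fun y => x < y)).card := by
      rw [← Finset.sum_add_distrib]
      exact Finset.sum_congr rfl fun x _ => hsplit x
    have hall : (∑ x : Fin n, ((univ : Finset (Fin n)).filter (fun y => x < y)).card)
        = n.choose 2 := by
      have hx : ∀ x : Fin n, ((univ : Finset (Fin n)).filter (fun y => x < y)).card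
          = n - 1 - (x : ℕ) := by
        intro x
        have : ((univ : Finset (Fin n)).filter (fun y => x < y))
            = ((univ : Finset (Fin n)).filter (fun y => (x : ℕ) < y.val)) := by
          apply filter_congr; intro y _; rw [Fin.lt_def]
        rw [this, finfilter_card (fun m => (x : ℕ) < m)]
        have : (range n).filter (fun m => (x : ℕ) < m) = Finset.Ico ((x : ℕ) + 1) n := by
          ext m; simp only [mem_filter, mem_range, mem_Ico]; omega
        rw [this, Nat.card_Ico]
        omega
      rw [Finset.sum_congr rfl fun x _ => hx x]
      rw [Fin.sum_univ_eq_sum_range (fun m => n - 1 - m)]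
      rw [sumtrunc (n - 1) n (by omega)]
      congr 1
      omega
    have hbad : (∑ x : Fin n, ((univ : Finset (Fin n)).filter
          (fun y => x < y ∧ ¬ cond x.val y.val)).card)
        = (n - k + 1).choose 2 := by
      have hx : ∀ x : Fin n, ((univ : Finset (Fin n)).filter
            (fun y => x < y ∧ ¬ cond x.val y.val)).card
          = if a ≤ (x : ℕ) then (n - b) - ((x : ℕ) + t) else 0 := by
        intro x
        have hiff : ∀ y : Fin n, (x < y ∧ ¬ cond x.val y.val)
            ↔ (a ≤ (x : ℕ) ∧ ((x : ℕ) + t ≤ y.val ∧ y.val < n - b)) := by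
          intro y
          rw [Fin.lt_def, hconddef]
          simp only
          omega
        rw [filter_congr (fun y _ => hiff y)]
        by_cases hax : a ≤ (x : ℕ)
        · rw [if_pos hax]
          have : (univ : Finset (Fin n)).filter
              (fun y => a ≤ (x : ℕ) ∧ ((x : ℕ) + t ≤ y.val ∧ y.val < n - b))
              = (univ : Finset (Fin n)).filter
              (fun y => (x : ℕ) + t ≤ y.val ∧ y.val < n - b) := by
            apply filter_congr; intro y _; tauto
          rw [this, finfilter_card (fun m => (x : ℕ) + t ≤ m ∧ m < n - b)]
          have : (range n).filter (fun m => (x : ℕ) + t ≤ m ∧ m < n - b)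
              = Finset.Ico ((x : ℕ) + t) (n - b) := by
            ext m; simp only [mem_filter, mem_range, mem_Ico]; omega
          rw [this, Nat.card_Ico]
        · rw [if_neg hax]
          rw [filter_false_of_mem, card_empty]
          intro y _
          tauto
      rw [Finset.sum_congr rfl fun x _ => hx x]
      rw [Fin.sum_univ_eq_sum_range (fun m => if a ≤ m then (n - b) - (m + t) else 0)]
      rw [← Finset.sum_filter]
      have : (range n).filter (fun m => a ≤ m) = Finset.Ico a n := by
        ext m; simp only [mem_filter, mem_range, mem_Ico]; omega
      rw [this, Finset.sum_Ico_eq_sum_range]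
      have hterm : ∀ m, (n - b) - ((a + m) + t) = (n - k) - m := by
        intro m; omega
      rw [Finset.sum_congr rfl fun m _ => hterm m]
      rw [sumtrunc (n - k) (n - a) (by omega)]
    have hboundbad : (n - k + 1).choose 2 ≤ n.choose 2 :=
      Nat.choose_le_choose 2 (by omega)
    omega
end Lower

section Upper
open Finset

lemma card_split_point (S : Finset ℕ) (β : ℕ) (hβ : β ∈ S) :
    (S.filter (fun v => v < β)).card + (S.filter (fun v => β < v)).card + 1 = S.card := by
  have h := tri_card S β β le_rfl
  have hmid : S.filter (fun v => β ≤ v ∧ v ≤ β) = {β} := by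
    ext x
    simp only [mem_filter, mem_singleton]
    constructor
    · rintro ⟨_, h1, h2⟩; omega
    · rintro rfl; exact ⟨hβ, le_rfl, le_rfl⟩
  rw [hmid, card_singleton] at h
  omega

lemma extendR {n : ℕ} {G : SimpleGraph (Fin n)} {E E' : Finset (ℕ × ℕ)} {β m y : ℕ}
    (hp : PeelR E E' β m y) (f : ℕ → Fin n)
    (hmono : ∀ a ∈ verts E', ∀ b ∈ verts E', a < b → f a < f b)
    (hadj : ∀ p ∈ E', G.Adj (f p.1) (f p.2))
    (w : Fin n) (hw : ∀ v ∈ verts E', f v < w) (hadjw : G.Adj (f β) w) :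
    OContains G E := by
  have hβv : β ∈ verts E' := fst_mem_verts hp.hy
  have hβm : β < m := hp.hmax β hβv
  have hvE : verts E = insert m (verts E') := by
    rw [hp.hmem, verts_insert]
    simp only
    rw [Finset.insert_comm, insert_eq_self.2 hβv]
  refine ⟨fun x => if x = m then w else f x, ?_, ?_⟩
  · intro u hu v hv huv
    rw [hvE, mem_insert] at hu hv
    rcases hu with rfl | hu
    · rcases hv with rfl | hv
      · omega
      · exact absurd (hp.hmax v hv) (by omega)
    · rcases hv with rfl | hv
      · have hune : u ≠ v := by have := hp.hmax u hu; omega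
        simp only [if_pos rfl, if_neg hune]
        exact hw u hu
      · have hune : u ≠ m := by have := hp.hmax u hu; omega
        have hvne : v ≠ m := by have := hp.hmax v hv; omega
        simp only [if_neg hune, if_neg hvne]
        exact hmono u hu v hv huv
  · intro p hpE
    rw [hp.hmem, mem_insert] at hpE
    rcases hpE with rfl | hpE
    · have hβne : β ≠ m := by omega
      simp only [if_neg hβne, if_pos rfl]
      exact hadjw
    · have h1 : p.1 ≠ m := by have := hp.hmax p.1 (fst_mem_verts hpE); omega
      have h2 : p.2 ≠ m := by have := hp.hmax p.2 (snd_mem_verts hpE); omega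
      simp only [if_neg h1, if_neg h2]
      exact hadj p hpE

lemma extendL {n : ℕ} {G : SimpleGraph (Fin n)} {E E' : Finset (ℕ × ℕ)} {β m y : ℕ}
    (hp : PeelL E E' β m y) (f : ℕ → Fin n)
    (hmono : ∀ a ∈ verts E', ∀ b ∈ verts E', a < b → f a < f b)
    (hadj : ∀ p ∈ E', G.Adj (f p.1) (f p.2))
    (w : Fin n) (hw : ∀ v ∈ verts E', w < f v) (hadjw : G.Adj w (f β)) :
    OContains G E := by
  have hβv : β ∈ verts E' := snd_mem_verts hp.hy
  have hβm : m < β := hp.hmin β hβv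
  have hvE : verts E = insert m (verts E') := by
    rw [hp.hmem, verts_insert]
    simp only
    rw [insert_eq_self.2 hβv]
  refine ⟨fun x => if x = m then w else f x, ?_, ?_⟩
  · intro u hu v hv huv
    rw [hvE, mem_insert] at hu hv
    rcases hu with rfl | hu
    · rcases hv with rfl | hv
      · omega
      · have hvne : v ≠ u := by have := hp.hmin v hv; omega
        simp only [if_pos rfl, if_neg hvne]
        exact hw v hv
    · rcases hv with rfl | hv
      · exact absurd (hp.hmin u hu) (by omega)
      · have hune : u ≠ m := by have := hp.hmin u hu; omega
        have hvne : v ≠ m := by have := hp.hmin v hv; omega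
        simp only [if_neg hune, if_neg hvne]
        exact hmono u hu v hv huv
  · intro p hpE
    rw [hp.hmem, mem_insert] at hpE
    rcases hpE with rfl | hpE
    · have hβne : β ≠ m := by omega
      simp only [if_neg hβne, if_pos rfl]
      exact hadjw
    · have h1 : p.1 ≠ m := by have := hp.hmin p.1 (fst_mem_verts hpE); omega
      have h2 : p.2 ≠ m := by have := hp.hmin p.2 (snd_mem_verts hpE); omega
      simp only [if_neg h1, if_neg h2]
      exact hadj p hpE

end Upper

section Main
open Finset

lemma upper_bound (k : ℕ) : ∀ (E : Finset (ℕ × ℕ)), ZTree E → E.card = k →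
    ∀ n : ℕ, k + 1 ≤ n → ∀ G : SimpleGraph (Fin n), ¬ OContains G E →
    G.edgeSet.ncard ≤ n.choose 2 - (n - k + 1).choose 2 := by
  induction k using Nat.strong_induction_on with
  | _ k ih =>
  intro E hZ hk n hn G hno
  classical
  by_cases hk2 : 2 ≤ k
  · -- inductive case
    obtain ⟨E', hZ', hcard', hpeel⟩ := ztree_peel hZ (by omega)
    have hkE' : E'.card = k - 1 := by omega
    rcases hpeel with ⟨β, m, y, hp⟩ | ⟨β, m, y, hp⟩
    · -- PeelR case
      have hβ : β ∈ verts E' := fst_mem_verts hp.hy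
      have hyv : y ∈ verts E' := snd_mem_verts hp.hy
      set A := ((verts E').filter (fun v => v < β)).card with hAdef
      set C := ((verts E').filter (fun v => β < v)).card with hCdef
      have hAC : A + C = k - 1 := by
        have h1 := card_split_point (verts E') β hβ
        rw [ztree_card_verts hZ', hkE'] at h1
        omega
      set W : Finset (Fin n) :=
        (univ : Finset (Fin n)).filter (fun v => A ≤ v.val ∧ v.val ≤ n - 1 - C) with hWdef
      set Nb : Fin n → Finset (Fin n) :=
        fun v => (G.neighborFinset v).filter (fun u => v < u) with hNbdef
      set D : Finset (Sym2 (Fin n)) :=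
        W.image (fun v => s(v, ((Nb v).max.getD v))) with hDdef
      set G' : SimpleGraph (Fin n) := G.deleteEdges ↑D with hG'def
      have hWcard : W.card ≤ n - k + 1 := by
        rw [hWdef, finfilter_card (fun mm => A ≤ mm ∧ mm ≤ n - 1 - C)]
        have hsub : (range n).filter (fun mm => A ≤ mm ∧ mm ≤ n - 1 - C)
            ⊆ Finset.Icc A (n - 1 - C) := by
          intro mm hmm
          rw [mem_filter] at hmm
          rw [mem_Icc]
          exact hmm.2
        calc ((range n).filter (fun mm => A ≤ mm ∧ mm ≤ n - 1 - C)).card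
            ≤ (Finset.Icc A (n - 1 - C)).card := card_le_card hsub
          _ = n - 1 - C + 1 - A := Nat.card_Icc _ _
          _ ≤ n - k + 1 := by omega
      have hDle : D.card ≤ n - k + 1 := le_trans card_image_le hWcard
      have hG'no : ¬ OContains G' E' := by
        rintro ⟨f, hmono, hadj⟩
        have hβy : β < y := ztree_edge_lt hZ' (β, y) hp.hy
        have hfy : f β < f y := hmono β hβ y hyv hβy
        have hfyadjG : G.Adj (f β) (f y) := by
          have := hadj (β, y) hp.hy
          rw [hG'def, SimpleGraph.deleteEdges_adj] at this
          exact this.1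
        have hFne : f y ∈ Nb (f β) := by
          rw [hNbdef]
          simp only [mem_filter, SimpleGraph.mem_neighborFinset]
          exact ⟨hfyadjG, hfy⟩
        have hFnon : (Nb (f β)).Nonempty := ⟨f y, hFne⟩
        set w := (Nb (f β)).max' hFnon with hwdef
        have hwF : w ∈ Nb (f β) := Finset.max'_mem _ _
        have hwadj : G.Adj (f β) w := by
          rw [hNbdef] at hwF
          simp only [mem_filter, SimpleGraph.mem_neighborFinset] at hwF
          exact hwF.1
        have hfyw : f y ≤ w := Finset.le_max' _ _ hFne
        have hfβW : f β ∈ W := by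
          rw [hWdef, mem_filter]
          refine ⟨mem_univ _, ?_, ?_⟩
          · rw [hAdef]
            calc ((verts E').filter (fun v => v < β)).card
                ≤ (range ((f β) : ℕ)).card := by
                  apply card_filter_le_of_maps _ f hmono
                  intro v hv hvP
                  rw [mem_range]
                  have := hmono v hv β hβ hvP
                  rwa [Fin.lt_def] at this
              _ = ((f β) : ℕ) := card_range _
          · have hCle : C ≤ n - ((f β : ℕ) + 1) := by
              rw [hCdef]
              calc ((verts E').filter (fun v => β < v)).card
                  ≤ (Finset.Ico ((f β : ℕ) + 1) n).card := by
                    apply card_filter_le_of_maps _ f hmono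
                    intro v hv hvP
                    rw [mem_Ico]
                    have := hmono β hβ v hv hvP
                    rw [Fin.lt_def] at this
                    exact ⟨by omega, (f v).isLt⟩
                _ = n - ((f β : ℕ) + 1) := Nat.card_Ico _ _
            have := (f β).isLt
            omega
        have hDmem : s(f β, w) ∈ D := by
          rw [hDdef]
          apply mem_image.2
          refine ⟨f β, hfβW, ?_⟩
          rw [← Finset.coe_max' hFnon]
          rfl
        have hG'w : ¬ G'.Adj (f β) w := by
          intro hyp
          rw [hG'def, SimpleGraph.deleteEdges_adj] at hyp
          exact hyp.2 (Finset.mem_coe.2 hDmem)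
        have hfy_ne : f y ≠ w := by
          intro heq
          apply hG'w
          rw [← heq]
          exact hadj (β, y) hp.hy
        have hfyltw : f y < w := lt_of_le_of_ne hfyw hfy_ne
        have hwall : ∀ v ∈ verts E', f v < w := by
          intro v hv
          have hvy : v ≤ y := hp.hytop v hv
          rcases Nat.eq_or_lt_of_le hvy with h | h
          · rw [h]; exact hfyltw
          · exact lt_trans (hmono v hv y hyv h) hfyltw
        exact hno (extendR hp f hmono
          (fun q hq => by
            have := hadj q hq
            rw [hG'def, SimpleGraph.deleteEdges_adj] at this
            exact this.1) w hwall hwadj)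
      have hIH := ih (k - 1) (by omega) E' hZ' hkE' n (by omega) G' hG'no
      have hsub : G.edgeSet ⊆ G'.edgeSet ∪ ↑D := by
        intro e he
        by_cases hD : e ∈ (↑D : Set (Sym2 (Fin n)))
        · exact Or.inr hD
        · left
          rw [hG'def, SimpleGraph.edgeSet_deleteEdges]
          exact ⟨he, hD⟩
      have h1 : G.edgeSet.ncard ≤ (G'.edgeSet ∪ ↑D).ncard :=
        Set.ncard_le_ncard hsub (Set.toFinite _)
      have h2 : (G'.edgeSet ∪ (↑D : Set (Sym2 (Fin n)))).ncard
          ≤ G'.edgeSet.ncard + (↑D : Set (Sym2 (Fin n))).ncard := Set.ncard_union_le _ _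
      rw [Set.ncard_coe_finset] at h2
      have harith := arith2 k n hk2 hn
      omega
    · -- PeelL case
      have hβ : β ∈ verts E' := snd_mem_verts hp.hy
      have hyv : y ∈ verts E' := fst_mem_verts hp.hy
      set A := ((verts E').filter (fun v => v < β)).card with hAdef
      set C := ((verts E').filter (fun v => β < v)).card with hCdef
      have hAC : A + C = k - 1 := by
        have h1 := card_split_point (verts E') β hβ
        rw [ztree_card_verts hZ', hkE'] at h1
        omega
      set W : Finset (Fin n) :=
        (univ : Finset (Fin n)).filter (fun v => A ≤ v.val ∧ v.val ≤ n - 1 - C) with hWdef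
      set Nb : Fin n → Finset (Fin n) :=
        fun v => (G.neighborFinset v).filter (fun u => u < v) with hNbdef
      set D : Finset (Sym2 (Fin n)) :=
        W.image (fun v => s(v, ((Nb v).min.getD v))) with hDdef
      set G' : SimpleGraph (Fin n) := G.deleteEdges ↑D with hG'def
      have hWcard : W.card ≤ n - k + 1 := by
        rw [hWdef, finfilter_card (fun mm => A ≤ mm ∧ mm ≤ n - 1 - C)]
        have hsub : (range n).filter (fun mm => A ≤ mm ∧ mm ≤ n - 1 - C)
            ⊆ Finset.Icc A (n - 1 - C) := by
          intro mm hmm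
          rw [mem_filter] at hmm
          rw [mem_Icc]
          exact hmm.2
        calc ((range n).filter (fun mm => A ≤ mm ∧ mm ≤ n - 1 - C)).card
            ≤ (Finset.Icc A (n - 1 - C)).card := card_le_card hsub
          _ = n - 1 - C + 1 - A := Nat.card_Icc _ _
          _ ≤ n - k + 1 := by omega
      have hDle : D.card ≤ n - k + 1 := le_trans card_image_le hWcard
      have hG'no : ¬ OContains G' E' := by
        rintro ⟨f, hmono, hadj⟩
        have hyβ : y < β := ztree_edge_lt hZ' (y, β) hp.hy
        have hfy : f y < f β := hmono y hyv β hβ hyβ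
        have hfyadjG : G.Adj (f y) (f β) := by
          have := hadj (y, β) hp.hy
          rw [hG'def, SimpleGraph.deleteEdges_adj] at this
          exact this.1
        have hFne : f y ∈ Nb (f β) := by
          rw [hNbdef]
          simp only [mem_filter, SimpleGraph.mem_neighborFinset]
          exact ⟨hfyadjG.symm, hfy⟩
        have hFnon : (Nb (f β)).Nonempty := ⟨f y, hFne⟩
        set w := (Nb (f β)).min' hFnon with hwdef
        have hwF : w ∈ Nb (f β) := Finset.min'_mem _ _
        have hwadj : G.Adj w (f β) := by
          rw [hNbdef] at hwF
          simp only [mem_filter, SimpleGraph.mem_neighborFinset] at hwF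
          exact hwF.1.symm
        have hfyw : w ≤ f y := Finset.min'_le _ _ hFne
        have hfβW : f β ∈ W := by
          rw [hWdef, mem_filter]
          refine ⟨mem_univ _, ?_, ?_⟩
          · rw [hAdef]
            calc ((verts E').filter (fun v => v < β)).card
                ≤ (range ((f β) : ℕ)).card := by
                  apply card_filter_le_of_maps _ f hmono
                  intro v hv hvP
                  rw [mem_range]
                  have := hmono v hv β hβ hvP
                  rwa [Fin.lt_def] at this
              _ = ((f β) : ℕ) := card_range _
          · have hCle : C ≤ n - ((f β : ℕ) + 1) := by
              rw [hCdef]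
              calc ((verts E').filter (fun v => β < v)).card
                  ≤ (Finset.Ico ((f β : ℕ) + 1) n).card := by
                    apply card_filter_le_of_maps _ f hmono
                    intro v hv hvP
                    rw [mem_Ico]
                    have := hmono β hβ v hv hvP
                    rw [Fin.lt_def] at this
                    exact ⟨by omega, (f v).isLt⟩
                _ = n - ((f β : ℕ) + 1) := Nat.card_Ico _ _
            have := (f β).isLt
            omega
        have hDmem : s(f β, w) ∈ D := by
          rw [hDdef]
          apply mem_image.2
          refine ⟨f β, hfβW, ?_⟩
          rw [← Finset.coe_min' hFnon]
          rfl
        have hG'w : ¬ G'.Adj (f β) w := by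
          intro hyp
          rw [hG'def, SimpleGraph.deleteEdges_adj] at hyp
          exact hyp.2 (Finset.mem_coe.2 hDmem)
        have hfy_ne : f y ≠ w := by
          intro heq
          apply hG'w
          rw [← heq]
          exact (hadj (y, β) hp.hy).symm
        have hfyltw : w < f y := lt_of_le_of_ne hfyw (fun hh => hfy_ne hh.symm)
        have hwall : ∀ v ∈ verts E', w < f v := by
          intro v hv
          have hvy : y ≤ v := hp.hybot v hv
          rcases Nat.eq_or_lt_of_le hvy with h | h
          · rw [← h]; exact hfyltw
          · exact lt_trans hfyltw (hmono y hyv v hv h)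
        exact hno (extendL hp f hmono
          (fun q hq => by
            have := hadj q hq
            rw [hG'def, SimpleGraph.deleteEdges_adj] at this
            exact this.1) w hwall hwadj)
      have hIH := ih (k - 1) (by omega) E' hZ' hkE' n (by omega) G' hG'no
      have hsub : G.edgeSet ⊆ G'.edgeSet ∪ ↑D := by
        intro e he
        by_cases hD : e ∈ (↑D : Set (Sym2 (Fin n)))
        · exact Or.inr hD
        · left
          rw [hG'def, SimpleGraph.edgeSet_deleteEdges]
          exact ⟨he, hD⟩
      have h1 : G.edgeSet.ncard ≤ (G'.edgeSet ∪ ↑D).ncard :=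
        Set.ncard_le_ncard hsub (Set.toFinite _)
      have h2 : (G'.edgeSet ∪ (↑D : Set (Sym2 (Fin n)))).ncard
          ≤ G'.edgeSet.ncard + (↑D : Set (Sym2 (Fin n))).ncard := Set.ncard_union_le _ _
      rw [Set.ncard_coe_finset] at h2
      have harith := arith2 k n hk2 hn
      omega
  · -- base case : k = 1
    have hk1 : k = 1 := by have := ztree_nonempty hZ; omega
    subst hk1
    obtain ⟨p, hpE⟩ := card_eq_one.1 hk
    have hplt : p.1 < p.2 := ztree_edge_lt hZ p (by rw [hpE]; exact mem_singleton_self p)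
    have hvE : verts E = {p.1, p.2} := by
      rw [hpE, show ({p} : Finset (ℕ × ℕ)) = insert p ∅ from rfl, verts_insert]
      rfl
    have hembed : ∀ u v : Fin n, u < v → G.Adj u v → False := by
      intro u v huv hadj
      apply hno
      refine ⟨fun x => if x = p.1 then u else v, ?_, ?_⟩
      · intro s hs t ht hst
        rw [hvE] at hs ht
        simp only [mem_insert, mem_singleton] at hs ht
        rcases hs with rfl | rfl <;> rcases ht with rfl | rfl
        · omega
        · simp only [if_pos rfl, if_neg (show p.2 ≠ p.1 by omega)]
          exact huv
        · omega
        · omega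
      · intro q hq
        rw [hpE, mem_singleton] at hq
        rw [hq]
        simp only [if_pos rfl, if_neg (show p.2 ≠ p.1 by omega)]
        exact hadj
    have hes : G.edgeSet = ∅ := by
      rw [Set.eq_empty_iff_forall_notMem]
      intro e
      induction e using Sym2.ind with
      | _ u v =>
        intro he
        rw [SimpleGraph.mem_edgeSet] at he
        rcases lt_trichotomy u v with huv | huv | huv
        · exact hembed u v huv he
        · exact (G.ne_of_adj he) huv
        · exact hembed v u huv he.symm
    rw [hes, Set.ncard_empty]
    exact Nat.zero_le _

end Main

/-- For a z-tree Z with k edges and n ≥ k+1, ex→(n,Z) = (k-1)n - C(k,2). -/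
theorem stmt_8 (k n : ℕ) (E : Finset (ℕ × ℕ))
    (hZ : ZTree E) (hk : E.card = k) (hn : k + 1 ≤ n) :
    (∀ G : SimpleGraph (Fin n), ¬ OContains G E →
        G.edgeSet.ncard ≤ (k - 1) * n - k.choose 2) ∧
    (∃ G : SimpleGraph (Fin n), ¬ OContains G E ∧
        G.edgeSet.ncard = (k - 1) * n - k.choose 2) := by
  subst hk
  have hk1 : 1 ≤ E.card := ztree_nonempty hZ
  constructor
  · intro G hno
    have h := upper_bound E.card E hZ rfl n hn G hno
    rwa [arith1 E.card n hk1 hn] at h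
  · obtain ⟨G, h1, h2⟩ := lower_bound hZ hn
    exact ⟨G, h1, by rw [h2, arith1 E.card n hk1 hn]⟩
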